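/- Let ψ ∈ L²(ℝ²) satisfy |Fψ(ξ)| = O(|ξ|^{-L}) for every L > 0 and the SIM(2) admissibility condition ∫_{[0,2π)×ℝ⁺}|Fψ(A_aR_φ^{-1}ξ)|² dφ da/a = 1. Then the function z(ξ) = ∫_{[0,2π)×[1,∞)} |Fψ(A_a R_φ^{-1}ξ)|² dφ da/a satisfies 0 ≤ z(ξ) ≤ 1 and z(ξ) = O(|ξ|^{-2L}) for every L > 0; consequently 1 − ∫_{[0,2π)×(0,1)}|Fψ(A_aR_φ^{-1}ξ)|² dφ da/a = z(ξ) admits a nonnegative square root of rapid decay. -/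

import Mathlib

open MeasureTheory Set
open scoped ENNReal

/-- The 2D Fourier transform `F f(ξ) = ∫ f(x) e^{-2πi ξ·x} dx`. -/
noncomputable def FT2 (f : ℝ × ℝ → ℂ) (ξ : ℝ × ℝ) : ℂ :=
  ∫ x : ℝ × ℝ, f x * Complex.exp (((-2) * Real.pi * (ξ.1 * x.1 + ξ.2 * x.2) : ℝ) * Complex.I)

/-- Let `ψ ∈ L²(ℝ²)` satisfy `|Fψ(ξ)| = O(|ξ|^{-L})` for every `L > 0` and the `SIM(2)`
admissibility condition `∫_{[0,2π)×ℝ⁺}|Fψ(A_a R_φ⁻¹ ξ)|² dφ da/a = 1`. Then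
`z(ξ) = ∫_{[0,2π)×[1,∞)} |Fψ(A_a R_φ⁻¹ ξ)|² dφ da/a` satisfies `0 ≤ z(ξ) ≤ 1`,
`1 - ∫_{[0,2π)×(0,1)} |Fψ(A_a R_φ⁻¹ ξ)|² dφ da/a = z(ξ)`, and `z(ξ) = O(|ξ|^{-2L})` for every
`L > 0` (so `z` admits a nonnegative square root of rapid decay). -/
theorem cutoff_function_exists (ψ : ℝ × ℝ → ℂ)
    (hψ1 : Integrable ψ) (hψ2 : MemLp ψ 2)
    (hdecay : ∀ L : ℝ, 0 < L → ∃ C : ℝ, 0 < C ∧ ∀ ξ : ℝ × ℝ, ξ ≠ 0 →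
      ‖FT2 ψ ξ‖ ≤ C * Real.sqrt (ξ.1 ^ 2 + ξ.2 ^ 2) ^ (-L))
    (hadm : ∀ ξ : ℝ × ℝ, ξ ≠ 0 →
      ∫⁻ p in Ico 0 (2 * Real.pi) ×ˢ Ioi (0 : ℝ),
        (‖FT2 ψ (p.2 * (Real.cos p.1 * ξ.1 + Real.sin p.1 * ξ.2),
                 p.2 * (-Real.sin p.1 * ξ.1 + Real.cos p.1 * ξ.2))‖₊ : ℝ≥0∞) ^ 2
          * (ENNReal.ofReal p.2)⁻¹ = 1) :
    (∀ ξ : ℝ × ℝ, ξ ≠ 0 →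
      (∫⁻ p in Ico 0 (2 * Real.pi) ×ˢ Ici (1 : ℝ),
        (‖FT2 ψ (p.2 * (Real.cos p.1 * ξ.1 + Real.sin p.1 * ξ.2),
                 p.2 * (-Real.sin p.1 * ξ.1 + Real.cos p.1 * ξ.2))‖₊ : ℝ≥0∞) ^ 2
          * (ENNReal.ofReal p.2)⁻¹) ≤ 1 ∧
      (∫⁻ p in Ico 0 (2 * Real.pi) ×ˢ Ioo (0 : ℝ) 1,
        (‖FT2 ψ (p.2 * (Real.cos p.1 * ξ.1 + Real.sin p.1 * ξ.2),
                 p.2 * (-Real.sin p.1 * ξ.1 + Real.cos p.1 * ξ.2))‖₊ : ℝ≥0∞) ^ 2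
          * (ENNReal.ofReal p.2)⁻¹)
        + (∫⁻ p in Ico 0 (2 * Real.pi) ×ˢ Ici (1 : ℝ),
        (‖FT2 ψ (p.2 * (Real.cos p.1 * ξ.1 + Real.sin p.1 * ξ.2),
                 p.2 * (-Real.sin p.1 * ξ.1 + Real.cos p.1 * ξ.2))‖₊ : ℝ≥0∞) ^ 2
          * (ENNReal.ofReal p.2)⁻¹) = 1) ∧
    (∀ L : ℝ, 0 < L → ∃ C : ℝ, 0 < C ∧ ∀ ξ : ℝ × ℝ, ξ ≠ 0 →
      (∫⁻ p in Ico 0 (2 * Real.pi) ×ˢ Ici (1 : ℝ),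
        (‖FT2 ψ (p.2 * (Real.cos p.1 * ξ.1 + Real.sin p.1 * ξ.2),
                 p.2 * (-Real.sin p.1 * ξ.1 + Real.cos p.1 * ξ.2))‖₊ : ℝ≥0∞) ^ 2
          * (ENNReal.ofReal p.2)⁻¹)
        ≤ ENNReal.ofReal (C * Real.sqrt (ξ.1 ^ 2 + ξ.2 ^ 2) ^ (-(2 * L)))) := by
  set f : (ℝ × ℝ) → ℝ × ℝ → ℝ≥0∞ := fun ξ p =>
    (‖FT2 ψ (p.2 * (Real.cos p.1 * ξ.1 + Real.sin p.1 * ξ.2),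
             p.2 * (-Real.sin p.1 * ξ.1 + Real.cos p.1 * ξ.2))‖₊ : ℝ≥0∞) ^ 2
      * (ENNReal.ofReal p.2)⁻¹ with hf
  have hsplit : ∀ ξ : ℝ × ℝ, ξ ≠ 0 →
      (∫⁻ p in Ico 0 (2 * Real.pi) ×ˢ Ioo (0 : ℝ) 1, f ξ p)
        + (∫⁻ p in Ico 0 (2 * Real.pi) ×ˢ Ici (1 : ℝ), f ξ p) = 1 := by
    intro ξ hξ
    have hs : Ico 0 (2 * Real.pi) ×ˢ Ioi (0 : ℝ)
        = (Ico 0 (2 * Real.pi) ×ˢ Ioo (0 : ℝ) 1) ∪ (Ico 0 (2 * Real.pi) ×ˢ Ici (1 : ℝ)) := by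
      rw [← Set.prod_union, Ioo_union_Ici_eq_Ioi zero_lt_one]
    have hdisj : Disjoint (Ico 0 (2 * Real.pi) ×ˢ Ioo (0 : ℝ) 1)
        (Ico 0 (2 * Real.pi) ×ˢ Ici (1 : ℝ)) := by
      rw [Set.disjoint_left]
      rintro p ⟨_, h2⟩ ⟨_, h2'⟩
      exact absurd (mem_Ici.mp h2') (not_le.mpr h2.2)
    have := hadm ξ hξ
    rwa [hs, lintegral_union (measurableSet_Ico.prod measurableSet_Ici) hdisj] at this
  refine ⟨fun ξ hξ => ⟨?_, hsplit ξ hξ⟩, ?_⟩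
  · exact le_of_le_of_eq le_add_self (hsplit ξ hξ)
  · intro L hL
    obtain ⟨C, hC, hCb⟩ := hdecay L hL
    refine ⟨Real.pi * C ^ 2 / L, by positivity, fun ξ hξ => ?_⟩
    set r : ℝ := Real.sqrt (ξ.1 ^ 2 + ξ.2 ^ 2) with hr
    have hne : ξ.1 ≠ 0 ∨ ξ.2 ≠ 0 := by
      by_contra h; push_neg at h; exact hξ (Prod.ext h.1 h.2)
    have hr0 : 0 < r := by
      apply Real.sqrt_pos.mpr
      rcases hne with h | h <;> positivity
    set K : ℝ := C ^ 2 * r ^ (-(2 * L)) with hK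
    set e : ℝ := -(2 * L + 1) with he
    have he1 : e < -1 := by rw [he]; linarith
    -- pointwise bound on the region
    have hpt : ∀ p ∈ Ico 0 (2 * Real.pi) ×ˢ Ici (1 : ℝ),
        f ξ p ≤ ENNReal.ofReal (K * p.2 ^ e) := by
      rintro ⟨φ, a⟩ ⟨-, (ha : 1 ≤ a)⟩
      have ha0 : (0 : ℝ) < a := lt_of_lt_of_le one_pos ha
      set η : ℝ × ℝ := (a * (Real.cos φ * ξ.1 + Real.sin φ * ξ.2),
        a * (-Real.sin φ * ξ.1 + Real.cos φ * ξ.2)) with hη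
      have hnorm : η.1 ^ 2 + η.2 ^ 2 = a ^ 2 * (ξ.1 ^ 2 + ξ.2 ^ 2) := by
        have hcs : Real.cos φ ^ 2 + Real.sin φ ^ 2 = 1 := Real.cos_sq_add_sin_sq φ
        simp only [hη]
        linear_combination (a ^ 2 * (ξ.1 ^ 2 + ξ.2 ^ 2)) * hcs
      have hsq : Real.sqrt (η.1 ^ 2 + η.2 ^ 2) = a * r := by
        rw [hnorm, hr, show a ^ 2 * (ξ.1 ^ 2 + ξ.2 ^ 2) = (a * a) * (ξ.1 ^ 2 + ξ.2 ^ 2) by ring,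
          Real.sqrt_mul (by positivity), Real.sqrt_mul_self ha0.le]
      have hη0 : η ≠ 0 := by
        intro h0
        have : η.1 ^ 2 + η.2 ^ 2 = 0 := by rw [h0]; simp
        rw [hnorm] at this
        have h2 : 0 < ξ.1 ^ 2 + ξ.2 ^ 2 := Real.sqrt_pos.mp hr0
        have h3 := mul_pos (pow_pos ha0 2) h2
        linarith
      have hb := hCb η hη0
      rw [hsq] at hb
      have har : (a * r) ^ (-L) = a ^ (-L) * r ^ (-L) := Real.mul_rpow ha0.le hr0.le
      have hbn : (0 : ℝ) ≤ C * (a * r) ^ (-L) := by positivity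
      have h1 : ((‖FT2 ψ η‖₊ : ℝ≥0∞)) ^ 2 ≤ ENNReal.ofReal ((C * (a * r) ^ (-L)) ^ 2) := by
        rw [ENNReal.ofReal_pow hbn, ← enorm_eq_nnnorm, ← ofReal_norm]
        exact pow_le_pow_left₀ (by positivity) (ENNReal.ofReal_le_ofReal hb) 2
      have h2 : f ξ (φ, a) ≤ ENNReal.ofReal ((C * (a * r) ^ (-L)) ^ 2) * ENNReal.ofReal a⁻¹ := by
        rw [hf]
        exact mul_le_mul' h1 (le_of_eq (ENNReal.ofReal_inv_of_pos ha0).symm)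
      refine h2.trans (le_of_eq ?_)
      rw [← ENNReal.ofReal_mul (by positivity)]
      congr 1
      have hpow : (a ^ (-L)) ^ 2 * a⁻¹ = a ^ e := by
        rw [← Real.rpow_natCast (a ^ (-L)) 2, ← Real.rpow_mul ha0.le,
          ← Real.rpow_neg_one a, ← Real.rpow_add ha0]
        norm_num [he]
        ring_nf
      have hrpow : (r ^ (-L)) ^ 2 = r ^ (-(2 * L)) := by
        rw [← Real.rpow_natCast (r ^ (-L)) 2, ← Real.rpow_mul hr0.le]
        norm_num
        ring_nf
      calc (C * (a * r) ^ (-L)) ^ 2 * a⁻¹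
          = C ^ 2 * (r ^ (-L)) ^ 2 * ((a ^ (-L)) ^ 2 * a⁻¹) := by rw [har]; ring
        _ = K * a ^ e := by rw [hpow, hrpow, hK]
    have hmeas : Measurable fun p : ℝ × ℝ => ENNReal.ofReal (K * p.2 ^ e) := by
      apply ENNReal.measurable_ofReal.comp
      exact measurable_const.mul (measurable_snd.pow_const e)
    refine (setLIntegral_mono (μ := volume) hmeas hpt).trans ?_
    -- compute the dominating integral
    have hinner : (∫⁻ a in Ici (1 : ℝ), ENNReal.ofReal (K * a ^ e))
        = ENNReal.ofReal (K * (1 / (2 * L))) := by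
      rw [← restrict_Ioi_eq_restrict_Ici]
      have hint : IntegrableOn (fun a : ℝ => K * a ^ e) (Ioi (1 : ℝ)) :=
        (integrableOn_Ioi_rpow_of_lt he1 one_pos).const_mul K
      have hnn : 0 ≤ᵐ[volume.restrict (Ioi (1 : ℝ))] fun a : ℝ => K * a ^ e := by
        filter_upwards [ae_restrict_mem measurableSet_Ioi] with a (ha : 1 < a)
        have : (0 : ℝ) < a := lt_trans one_pos ha
        positivity
      rw [← ofReal_integral_eq_lintegral_ofReal hint hnn, integral_const_mul,
        integral_Ioi_rpow_of_lt he1 one_pos]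
      congr 2
      rw [Real.one_rpow, he]
      field_simp
      ring
    have hcalc : (∫⁻ p in Ico 0 (2 * Real.pi) ×ˢ Ici (1 : ℝ),
        ENNReal.ofReal (K * p.2 ^ e))
        = ENNReal.ofReal (K * (1 / (2 * L))) * ENNReal.ofReal (2 * Real.pi) := by
      rw [Measure.volume_eq_prod, ← Measure.prod_restrict,
        lintegral_prod _ hmeas.aemeasurable]
      simp only [hinner, lintegral_const, Measure.restrict_apply MeasurableSet.univ,
        Set.univ_inter, Real.volume_Ico, sub_zero]
    rw [hcalc, ← ENNReal.ofReal_mul (by positivity)]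
    apply ENNReal.ofReal_le_ofReal
    rw [hK]
    have : C ^ 2 * r ^ (-(2 * L)) * (1 / (2 * L)) * (2 * Real.pi)
        = Real.pi * C ^ 2 / L * r ^ (-(2 * L)) := by
      field_simp
    rw [this]
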